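/- If X ⊆ ℝ^n is such that the lattice Co(ℝ^n, X) is join-semidistributive, then X is sparse: for every 2-dimensional affine subspace H of ℝ^n, the set X ∩ H has empty interior in H. -/

import Mathlib

/-- `Y` is a relatively convex subset of `X`: `Y = conv(Y) ∩ X`. -/
def relConvex {n : ℕ} (X Y : Set (EuclideanSpace ℝ (Fin n))) : Prop :=
  Y = convexHull ℝ Y ∩ X

/-- The join in the lattice `Co(ℝ^n, X)`: `A ∨ B = conv(A ∪ B) ∩ X`. -/
def coJoin {n : ℕ} (X A B : Set (EuclideanSpace ℝ (Fin n))) : Set (EuclideanSpace ℝ (Fin n)) :=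
  convexHull ℝ (A ∪ B) ∩ X

set_option maxHeartbeats 1000000 in
/-- If `Co(ℝ^n, X)` is join-semidistributive, then `X` is sparse: for every
`2`-dimensional affine subspace `H` of `ℝ^n`, the set `X ∩ H` has empty interior
in the subspace topology of `H`. -/
theorem sparse_of_jsd {n : ℕ} (X : Set (EuclideanSpace ℝ (Fin n)))
    (hjsd : ∀ A B C, relConvex X A → relConvex X B → relConvex X C →
      coJoin X A B = coJoin X A C → coJoin X A B = coJoin X A (B ∩ C)) :
    ∀ H : AffineSubspace ℝ (EuclideanSpace ℝ (Fin n)),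
      Module.finrank ℝ H.direction = 2 →
      interior ((↑) ⁻¹' X : Set H) = (∅ : Set H) := by
  intro H hH2
  by_contra hne
  obtain ⟨x, hx⟩ := Set.nonempty_iff_ne_empty.mpr hne
  rw [mem_interior_iff_mem_nhds, Metric.mem_nhds_iff] at hx
  obtain ⟨ε, hε, hball⟩ := hx
  have hXmem : ∀ p : EuclideanSpace ℝ (Fin n), p ∈ H →
      dist p (x : EuclideanSpace ℝ (Fin n)) < ε → p ∈ X := by
    intro p hpH hpd
    have hm : (⟨p, hpH⟩ : H) ∈ Metric.ball x ε := by
      simp only [Metric.mem_ball, Subtype.dist_eq]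
      exact hpd
    exact hball hm
  -- obtain two independent small vectors in the direction of H
  obtain ⟨d, e, hdH, heH, hind, hdn, hen⟩ :
      ∃ d e : EuclideanSpace ℝ (Fin n), d ∈ H.direction ∧ e ∈ H.direction ∧
        (∀ s t : ℝ, s • d + t • e = 0 → s = 0 ∧ t = 0) ∧ ‖d‖ < ε / 4 ∧ ‖e‖ < ε / 4 := by
    have bb := Module.finBasisOfFinrankEq ℝ H.direction hH2
    have key : ∀ s t : ℝ, s • ((bb 0 : H.direction) : EuclideanSpace ℝ (Fin n))
        + t • ((bb 1 : H.direction) : EuclideanSpace ℝ (Fin n)) = 0 → s = 0 ∧ t = 0 := by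
      intro s t hst
      have hst' : s • (bb 0) + t • (bb 1) = 0 := by
        rw [← ZeroMemClass.coe_eq_zero]
        push_cast
        exact hst
      have h2 := Fintype.linearIndependent_iff.mp bb.linearIndependent ![s, t]
        (by simpa [Fin.sum_univ_two] using hst')
      exact ⟨h2 0, h2 1⟩
    set d₁ : EuclideanSpace ℝ (Fin n) := ((bb 0 : H.direction) : EuclideanSpace ℝ (Fin n)) with hd₁
    set e₁ : EuclideanSpace ℝ (Fin n) := ((bb 1 : H.direction) : EuclideanSpace ℝ (Fin n)) with he₁
    have hrd : (0:ℝ) < ε / (4 * (‖d₁‖ + 1)) := by positivity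
    have hre : (0:ℝ) < ε / (4 * (‖e₁‖ + 1)) := by positivity
    refine ⟨(ε / (4 * (‖d₁‖ + 1))) • d₁, (ε / (4 * (‖e₁‖ + 1))) • e₁,
      Submodule.smul_mem _ _ (bb 0).2, Submodule.smul_mem _ _ (bb 1).2, ?_, ?_, ?_⟩
    · intro s t hst
      have h := key (s * (ε / (4 * (‖d₁‖ + 1)))) (t * (ε / (4 * (‖e₁‖ + 1))))
        (by simpa only [smul_smul] using hst)
      constructor
      · exact (mul_eq_zero.mp h.1).resolve_right hrd.ne'
      · exact (mul_eq_zero.mp h.2).resolve_right hre.ne'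
    · rw [norm_smul, Real.norm_eq_abs, abs_of_pos hrd, div_mul_eq_mul_div,
        div_lt_div_iff₀ (by positivity) (by norm_num)]
      nlinarith [norm_nonneg d₁]
    · rw [norm_smul, Real.norm_eq_abs, abs_of_pos hre, div_mul_eq_mul_div,
        div_lt_div_iff₀ (by positivity) (by norm_num)]
      nlinarith [norm_nonneg e₁]
  set x' : EuclideanSpace ℝ (Fin n) := (x : EuclideanSpace ℝ (Fin n)) with hx'def
  -- the bounding convex set K, contained in X
  set K : Set (EuclideanSpace ℝ (Fin n)) :=
    {p | ∃ a b : ℝ, |a| ≤ 2 ∧ |b| ≤ 1 ∧ p = x' + a • d + b • e} with hK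
  have hKX : K ⊆ X := by
    rintro p ⟨a, b, ha, hb, rfl⟩
    apply hXmem
    · have hv : a • d + b • e ∈ H.direction :=
        add_mem (Submodule.smul_mem _ _ hdH) (Submodule.smul_mem _ _ heH)
      have h1 := AffineSubspace.vadd_mem_of_mem_direction hv x.2
      have heq : (a • d + b • e) +ᵥ (x : EuclideanSpace ℝ (Fin n)) = x' + a • d + b • e := by
        rw [vadd_eq_add, ← hx'def]; module
      rwa [heq] at h1
    · have heq : (x' + a • d + b • e) - x' = a • d + b • e := by module
      rw [dist_eq_norm, heq]
      have h1 : ‖a • d + b • e‖ ≤ ‖a • d‖ + ‖b • e‖ := norm_add_le _ _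
      have h2 : ‖a • d‖ = |a| * ‖d‖ := by rw [norm_smul, Real.norm_eq_abs]
      have h3 : ‖b • e‖ = |b| * ‖e‖ := by rw [norm_smul, Real.norm_eq_abs]
      have h4 : |a| * ‖d‖ ≤ 2 * ‖d‖ := mul_le_mul_of_nonneg_right ha (norm_nonneg d)
      have h5 : |b| * ‖e‖ ≤ 1 * ‖e‖ := mul_le_mul_of_nonneg_right hb (norm_nonneg e)
      linarith
  have hKconv : Convex ℝ K := by
    rintro p ⟨a, b, ha, hb, rfl⟩ q ⟨a', b', ha', hb', rfl⟩ θ₁ θ₂ hθ₁ hθ₂ hθ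
    have hθ' : θ₂ = 1 - θ₁ := by linarith
    subst hθ'
    refine ⟨θ₁ * a + (1 - θ₁) * a', θ₁ * b + (1 - θ₁) * b', ?_, ?_, by module⟩
    · calc |θ₁ * a + (1 - θ₁) * a'| ≤ |θ₁ * a| + |(1 - θ₁) * a'| := abs_add_le _ _
        _ = θ₁ * |a| + (1 - θ₁) * |a'| := by
            rw [abs_mul, abs_mul, abs_of_nonneg hθ₁, abs_of_nonneg hθ₂]
        _ ≤ 2 := by nlinarith [abs_nonneg a, abs_nonneg a']
    · calc |θ₁ * b + (1 - θ₁) * b'| ≤ |θ₁ * b| + |(1 - θ₁) * b'| := abs_add_le _ _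
        _ = θ₁ * |b| + (1 - θ₁) * |b'| := by
            rw [abs_mul, abs_mul, abs_of_nonneg hθ₁, abs_of_nonneg hθ₂]
        _ ≤ 1 := by nlinarith [abs_nonneg b, abs_nonneg b']
  -- the three relatively convex sets
  set A := segment ℝ (x' - (2:ℝ) • d) (x' + (2:ℝ) • d) with hA
  set B := openSegment ℝ (x' + (2⁻¹:ℝ) • e - (4⁻¹:ℝ) • d) (x' + e) with hB
  set C := openSegment ℝ (x' + (2⁻¹:ℝ) • e + (4⁻¹:ℝ) • d) (x' + e) with hC
  have huK : x' - (2:ℝ) • d ∈ K := ⟨-2, 0, by norm_num [abs_le], by norm_num [abs_le], by module⟩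
  have hwK : x' + (2:ℝ) • d ∈ K := ⟨2, 0, by norm_num [abs_le], by norm_num [abs_le], by module⟩
  have hmK : x' + (2⁻¹:ℝ) • e - (4⁻¹:ℝ) • d ∈ K :=
    ⟨-4⁻¹, 2⁻¹, by norm_num [abs_le], by norm_num [abs_le], by module⟩
  have hm'K : x' + (2⁻¹:ℝ) • e + (4⁻¹:ℝ) • d ∈ K :=
    ⟨4⁻¹, 2⁻¹, by norm_num [abs_le], by norm_num [abs_le], by module⟩
  have hvK : x' + e ∈ K := ⟨0, 1, by norm_num [abs_le], by norm_num [abs_le], by module⟩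
  have hAK : A ⊆ K := hKconv.segment_subset huK hwK
  have hBK : B ⊆ K := (openSegment_subset_segment ℝ _ _).trans (hKconv.segment_subset hmK hvK)
  have hCK : C ⊆ K := (openSegment_subset_segment ℝ _ _).trans (hKconv.segment_subset hm'K hvK)
  have relA : relConvex X A := by
    show A = convexHull ℝ A ∩ X
    rw [hA, (convex_segment _ _).convexHull_eq,
      Set.inter_eq_self_of_subset_left (hA ▸ (hAK.trans hKX))]
  have relB : relConvex X B := by
    show B = convexHull ℝ B ∩ X
    rw [hB, (convex_openSegment _ _).convexHull_eq,
      Set.inter_eq_self_of_subset_left (hB ▸ (hBK.trans hKX))]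
  have relC : relConvex X C := by
    show C = convexHull ℝ C ∩ X
    rw [hC, (convex_openSegment _ _).convexHull_eq,
      Set.inter_eq_self_of_subset_left (hC ▸ (hCK.trans hKX))]
  -- key inclusion: B ⊆ conv(A ∪ C)
  have hBsubC : B ⊆ convexHull ℝ (A ∪ C) := by
    intro p hp
    rw [hB] at hp
    obtain ⟨a, t, ha, ht, hat, rfl⟩ := hp
    have ha' : a = 1 - t := by linarith
    subst ha'
    have ht1 : t < 1 := by linarith
    have h3t : (0:ℝ) < 3 + t := by linarith
    have h3t' : (3:ℝ) + t ≠ 0 := h3t.ne'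
    have hmemA : x' - ((2+t)/2) • d ∈ A := by
      rw [hA]
      refine ⟨(6+t)/8, (2-t)/8, by linarith, by linarith, by ring, ?_⟩
      match_scalars <;> ring
    have hmemC : ((1-t)/2) • (x' + (2⁻¹:ℝ) • e + (4⁻¹:ℝ) • d) + ((1+t)/2) • (x' + e) ∈ C := by
      rw [hC]
      exact ⟨(1-t)/2, (1+t)/2, by linarith, by linarith, by ring, rfl⟩
    have hcomb := (convex_convexHull ℝ (A ∪ C))
      (subset_convexHull ℝ _ (Set.mem_union_left _ hmemA))
      (subset_convexHull ℝ _ (Set.mem_union_right _ hmemC))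
      (div_nonneg (by linarith) (by linarith) : (0:ℝ) ≤ (1-t)/(3+t))
      (div_nonneg (by linarith) (by linarith) : (0:ℝ) ≤ (2+2*t)/(3+t))
      (by rw [← add_div, div_eq_one_iff_eq h3t']; ring)
    have heq : ((1-t)/(3+t)) • (x' - ((2+t)/2) • d)
        + ((2+2*t)/(3+t)) • (((1-t)/2) • (x' + (2⁻¹:ℝ) • e + (4⁻¹:ℝ) • d) + ((1+t)/2) • (x' + e))
        = (1-t) • (x' + (2⁻¹:ℝ) • e - (4⁻¹:ℝ) • d) + t • (x' + e) := by
      match_scalars <;> field_simp <;> ring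
    rw [heq] at hcomb
    exact hcomb
  -- key inclusion: C ⊆ conv(A ∪ B)
  have hCsubB : C ⊆ convexHull ℝ (A ∪ B) := by
    intro p hp
    rw [hC] at hp
    obtain ⟨a, t, ha, ht, hat, rfl⟩ := hp
    have ha' : a = 1 - t := by linarith
    subst ha'
    have ht1 : t < 1 := by linarith
    have h3t : (0:ℝ) < 3 + t := by linarith
    have h3t' : (3:ℝ) + t ≠ 0 := h3t.ne'
    have hmemA : x' + ((2+t)/2) • d ∈ A := by
      rw [hA]
      refine ⟨(2-t)/8, (6+t)/8, by linarith, by linarith, by ring, ?_⟩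
      match_scalars <;> ring
    have hmemB : ((1-t)/2) • (x' + (2⁻¹:ℝ) • e - (4⁻¹:ℝ) • d) + ((1+t)/2) • (x' + e) ∈ B := by
      rw [hB]
      exact ⟨(1-t)/2, (1+t)/2, by linarith, by linarith, by ring, rfl⟩
    have hcomb := (convex_convexHull ℝ (A ∪ B))
      (subset_convexHull ℝ _ (Set.mem_union_left _ hmemA))
      (subset_convexHull ℝ _ (Set.mem_union_right _ hmemB))
      (div_nonneg (by linarith) (by linarith) : (0:ℝ) ≤ (1-t)/(3+t))
      (div_nonneg (by linarith) (by linarith) : (0:ℝ) ≤ (2+2*t)/(3+t))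
      (by rw [← add_div, div_eq_one_iff_eq h3t']; ring)
    have heq : ((1-t)/(3+t)) • (x' + ((2+t)/2) • d)
        + ((2+2*t)/(3+t)) • (((1-t)/2) • (x' + (2⁻¹:ℝ) • e - (4⁻¹:ℝ) • d) + ((1+t)/2) • (x' + e))
        = (1-t) • (x' + (2⁻¹:ℝ) • e + (4⁻¹:ℝ) • d) + t • (x' + e) := by
      match_scalars <;> field_simp <;> ring
    rw [heq] at hcomb
    exact hcomb
  -- equal joins
  have hhull : convexHull ℝ (A ∪ B) = convexHull ℝ (A ∪ C) := by
    apply Set.Subset.antisymm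
    · apply convexHull_min _ (convex_convexHull ℝ _)
      rintro y (hy | hy)
      · exact subset_convexHull ℝ _ (Set.mem_union_left _ hy)
      · exact hBsubC hy
    · apply convexHull_min _ (convex_convexHull ℝ _)
      rintro y (hy | hy)
      · exact subset_convexHull ℝ _ (Set.mem_union_left _ hy)
      · exact hCsubB hy
  have hJ : coJoin X A B = coJoin X A C := by
    unfold coJoin; rw [hhull]
  have hfin := hjsd A B C relA relB relC hJ
  -- B ∩ C = ∅
  have hBC : B ∩ C = ∅ := by
    rw [Set.eq_empty_iff_forall_notMem]
    rintro p ⟨hp1, hp2⟩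
    rw [hB] at hp1
    rw [hC] at hp2
    obtain ⟨a, b, ha, hb, hab, hz⟩ := hp1
    obtain ⟨a', b', ha', hb', hab', hz'⟩ := hp2
    have hb1 : b = 1 - a := by linarith
    have hb2 : b' = 1 - a' := by linarith
    subst hb1; subst hb2
    have hkey : (-((a + a')/4)) • d + ((a' - a)/2) • e = 0 := by
      have h1 : (-((a + a')/4)) • d + ((a' - a)/2) • e
          = (a • (x' + (2⁻¹:ℝ) • e - (4⁻¹:ℝ) • d) + (1-a) • (x' + e))
            - (a' • (x' + (2⁻¹:ℝ) • e + (4⁻¹:ℝ) • d) + (1-a') • (x' + e)) := by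
        match_scalars <;> ring
      rw [h1, hz, hz', sub_self]
    have h0 := (hind _ _ hkey).1
    have : a + a' = 0 := by linarith
    linarith
  rw [hBC] at hfin
  -- the contradiction point
  have hb₀B : (2⁻¹:ℝ) • (x' + (2⁻¹:ℝ) • e - (4⁻¹:ℝ) • d) + (2⁻¹:ℝ) • (x' + e) ∈ B := by
    rw [hB]
    exact ⟨2⁻¹, 2⁻¹, by norm_num, by norm_num, by norm_num, rfl⟩
  have hb₀X : (2⁻¹:ℝ) • (x' + (2⁻¹:ℝ) • e - (4⁻¹:ℝ) • d) + (2⁻¹:ℝ) • (x' + e) ∈ X :=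
    hKX ⟨-(1/8), 3/4, by norm_num [abs_le], by norm_num [abs_le], by match_scalars <;> norm_num⟩
  have hb₀J : (2⁻¹:ℝ) • (x' + (2⁻¹:ℝ) • e - (4⁻¹:ℝ) • d) + (2⁻¹:ℝ) • (x' + e) ∈ coJoin X A B :=
    ⟨subset_convexHull ℝ _ (Set.mem_union_right _ hb₀B), hb₀X⟩
  rw [hfin] at hb₀J
  have hb₀A : (2⁻¹:ℝ) • (x' + (2⁻¹:ℝ) • e - (4⁻¹:ℝ) • d) + (2⁻¹:ℝ) • (x' + e) ∈ A := by
    have h1 := hb₀J.1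
    rw [Set.union_empty] at h1
    have h2 : convexHull ℝ A = A := by rw [hA]; exact (convex_segment _ _).convexHull_eq
    rwa [h2] at h1
  rw [hA] at hb₀A
  obtain ⟨θ₁, θ₂, hθ₁, hθ₂, hθ, hcomb⟩ := hb₀A
  have hθ' : θ₁ = 1 - θ₂ := by linarith
  subst hθ'
  have h0 : (4*θ₂ - 2 + 8⁻¹) • d + (-(3/4):ℝ) • e = 0 := by
    have h1 : (4*θ₂ - 2 + 8⁻¹) • d + (-(3/4):ℝ) • e
        = ((1-θ₂) • (x' - (2:ℝ) • d) + θ₂ • (x' + (2:ℝ) • d))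
          - ((2⁻¹:ℝ) • (x' + (2⁻¹:ℝ) • e - (4⁻¹:ℝ) • d) + (2⁻¹:ℝ) • (x' + e)) := by
      match_scalars <;> ring
    rw [h1, hcomb, sub_self]
  have := (hind _ _ h0).2
  norm_num at this
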